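/- Proposition (strong displacement monotonicity of the chain-interaction cost, Example 3.1). Let d ≥ 1, let φ : ℝ^d → ℝ be twice continuously differentiable with λ‖v‖² ≤ ⟨D²φ(x) v, v⟩ ≤ Λ‖v‖² for all x, v ∈ ℝ^d, where 0 < λ ≤ Λ, and let μ ∈ (0,1). Then for all vectors a, a′, b₁, b₁′, b₂, b₂′ ∈ ℝ^d one has ⟨∇φ(a − μ b₁) − ∇φ(a′ − μ b₁′), a − a′⟩ + ⟨∇φ(a − μ b₂) − ∇φ(a′ − μ b₂′), a − a′⟩ ≥ λ‖a − a′‖² − (μΛ/2)·(‖b₁ − b₁′‖² + ‖b₂ − b₂′‖²). (This says that on the chain graph, the cost f^i(x) = ∑_{j ∼ i} φ(x^i − μ x^j), whose neighbours are j = i−1 and j = i+1, satisfies Assumption (c) of the paper with constants K_f^i = λ and ℓ_f^i = μΛ/2, the left-hand side being ⟨D_i f^i(x) − D_i f^i(y), x^i − y^i⟩ with a = x^i, a′ = y^i, b₁ = x^{i−1}, b₂ = x^{i+1}, etc.) -/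

import Mathlib

open scoped RealInnerProductSpace

section Aux

variable {d : ℕ}

local notation "E" => EuclideanSpace ℝ (Fin d)

private lemma grad_inner (φ : E → ℝ) (x y : E) :
    ⟪gradient φ x, y⟫ = fderiv ℝ φ x y := by
  rw [gradient, InnerProductSpace.toDual_symm_apply]

/-- Monotonicity along segments from a pointwise lower bound on the second derivative
applied to the displacement. -/
private lemma key_mvt (φ : E → ℝ) (hφ : ContDiff ℝ 2 φ) (p q e : E) (c : ℝ)
    (hc : ∀ x : E, c ≤ fderiv ℝ (fderiv ℝ φ) x (p - q) e) :
    c ≤ ⟪gradient φ p - gradient φ q, e⟫ := by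
  have hφ1 : ContDiff ℝ 1 (fderiv ℝ φ) := hφ.fderiv_right (by norm_num)
  set w : E := p - q with hw
  set g : ℝ → ℝ := fun t => fderiv ℝ φ (q + t • w) e with hg
  have hderiv : ∀ t : ℝ, HasDerivAt g (fderiv ℝ (fderiv ℝ φ) (q + t • w) w e) t := by
    intro t
    have h1 : HasDerivAt (fun t : ℝ => q + t • w) w t := by
      simpa using ((hasDerivAt_id t).smul_const w).const_add q
    have h2 : HasFDerivAt (fderiv ℝ φ) (fderiv ℝ (fderiv ℝ φ) (q + t • w)) (q + t • w) :=
      (hφ1.differentiable one_ne_zero (q + t • w)).hasFDerivAt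
    have h3 : HasDerivAt (fun t : ℝ => fderiv ℝ φ (q + t • w))
        (fderiv ℝ (fderiv ℝ φ) (q + t • w) w) t := h2.comp_hasDerivAt t h1
    simpa using h3.clm_apply (hasDerivAt_const t e)
  have hcont : Continuous g := by
    have h0 : Continuous fun t : ℝ => q + t • w := by continuity
    exact (hφ1.continuous.comp h0).clm_apply continuous_const
  have hdiffg : DifferentiableOn ℝ g (interior (Set.Icc (0:ℝ) 1)) :=
    fun t _ => ((hderiv t).differentiableAt).differentiableWithinAt
  have := Convex.mul_sub_le_image_sub_of_le_deriv (convex_Icc (0:ℝ) 1)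
      hcont.continuousOn hdiffg (fun t _ => by
        rw [(hderiv t).deriv]; exact hc (q + t • w))
      0 (Set.left_mem_Icc.2 zero_le_one) 1 (Set.right_mem_Icc.2 zero_le_one) zero_le_one
  have h01 : g 1 - g 0 = ⟪gradient φ p - gradient φ q, e⟫ := by
    simp only [hg, inner_sub_left, grad_inner]
    norm_num [hw]
  linarith [this, h01]

private lemma real_arith {lam Lam μ s p r ne nd : ℝ} (hlam : 0 < lam) (hμ0 : 0 < μ)
    (hμ1 : μ < 1) (h2 : 2 * s ≤ p + r) (hp : p ≤ Lam * nd) (hr : lam * ne ≤ r)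
    (hne : 0 ≤ ne) (hnd : 0 ≤ nd) :
    lam / 2 * ne - μ * Lam / 2 * nd ≤ r - μ * s := by
  have h1 : μ * (2 * s) ≤ μ * (p + r) := mul_le_mul_of_nonneg_left h2 hμ0.le
  have h3 : μ * p ≤ μ * (Lam * nd) := mul_le_mul_of_nonneg_left hp hμ0.le
  have h5 : 0 ≤ lam * ne := mul_nonneg hlam.le hne
  have h6 : 0 ≤ (1 - μ) * r := mul_nonneg (by linarith) (by linarith)
  nlinarith [h1, h3, h5, h6]

end Aux

/-- **Strong displacement monotonicity of the chain-interaction cost**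
(Example 3.1).  Let `φ : ℝ^d → ℝ` be `C²` with `λ‖v‖² ≤ ⟨D²φ(x)v, v⟩ ≤ Λ‖v‖²`
for all `x, v`, where `0 < λ ≤ Λ`, and let `μ ∈ (0,1)`.  Then for all
`a, a', b₁, b₁', b₂, b₂' ∈ ℝ^d`,
`⟨∇φ(a − μb₁) − ∇φ(a' − μb₁'), a − a'⟩ + ⟨∇φ(a − μb₂) − ∇φ(a' − μb₂'), a − a'⟩
  ≥ λ‖a − a'‖² − (μΛ/2)(‖b₁ − b₁'‖² + ‖b₂ − b₂'‖²)`. -/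
theorem stmt14 (d : ℕ) (hd : 1 ≤ d)
    (φ : EuclideanSpace ℝ (Fin d) → ℝ)
    (lam Lam μ : ℝ) (hlam : 0 < lam) (hlL : lam ≤ Lam)
    (hμ : μ ∈ Set.Ioo (0 : ℝ) 1)
    (hφ : ContDiff ℝ 2 φ)
    (hHess : ∀ x v : EuclideanSpace ℝ (Fin d),
      lam * ‖v‖ ^ 2 ≤ iteratedFDeriv ℝ 2 φ x ![v, v] ∧
        iteratedFDeriv ℝ 2 φ x ![v, v] ≤ Lam * ‖v‖ ^ 2) :
    ∀ a a' b₁ b₁' b₂ b₂' : EuclideanSpace ℝ (Fin d),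
      lam * ‖a - a'‖ ^ 2 - μ * Lam / 2 * (‖b₁ - b₁'‖ ^ 2 + ‖b₂ - b₂'‖ ^ 2) ≤
        ⟪gradient φ (a - μ • b₁) - gradient φ (a' - μ • b₁'), a - a'⟫ +
          ⟪gradient φ (a - μ • b₂) - gradient φ (a' - μ • b₂'), a - a'⟫ := by
  intro a a' b₁ b₁' b₂ b₂'
  obtain ⟨hμ0, hμ1⟩ := hμ
  set B : EuclideanSpace ℝ (Fin d) → EuclideanSpace ℝ (Fin d) →L[ℝ]
      EuclideanSpace ℝ (Fin d) →L[ℝ] ℝ := fun x => fderiv ℝ (fderiv ℝ φ) x with hB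
  have hBq : ∀ x v, lam * ‖v‖ ^ 2 ≤ B x v v ∧ B x v v ≤ Lam * ‖v‖ ^ 2 := by
    intro x v
    have := hHess x v
    rwa [iteratedFDeriv_two_apply] at this
  have hBsymm : ∀ x v w, B x v w = B x w v := fun x v w =>
    (hφ.contDiffAt.isSymmSndFDerivAt (by norm_num)) v w
  -- the key per-neighbour estimate
  have key : ∀ b b' : EuclideanSpace ℝ (Fin d),
      lam / 2 * ‖a - a'‖ ^ 2 - μ * Lam / 2 * ‖b - b'‖ ^ 2 ≤
        ⟪gradient φ (a - μ • b) - gradient φ (a' - μ • b'), a - a'⟫ := by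
    intro b b'
    set e := a - a'
    set δ := b - b'
    have hdiff : (a - μ • b) - (a' - μ • b') = e - μ • δ := by
      simp only [e, δ, smul_sub]; abel
    apply key_mvt φ hφ _ _ _ _
    intro x
    rw [hdiff]
    -- bilinearity
    have hexp : B x (e - μ • δ) e = B x e e - μ * B x δ e := by
      simp [map_sub, map_smul]
    -- Cauchy-Schwarz-type bound: 2 B δ e ≤ B δ δ + B e e
    have hpos : 0 ≤ B x (δ - e) (δ - e) :=
      le_trans (by positivity) (hBq x (δ - e)).1
    have hexp2 : B x (δ - e) (δ - e) = B x δ δ - 2 * B x δ e + B x e e := by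
      have := hBsymm x e δ
      simp only [map_sub, ContinuousLinearMap.sub_apply]
      linarith
    have h2 : 2 * B x δ e ≤ B x δ δ + B x e e := by linarith [hexp2 ▸ hpos]
    have hδΛ : B x δ δ ≤ Lam * ‖δ‖ ^ 2 := (hBq x δ).2
    have hele : lam * ‖e‖ ^ 2 ≤ B x e e := (hBq x e).1
    have heΛ : B x e e ≤ Lam * ‖e‖ ^ 2 := (hBq x e).2
    exact le_trans (real_arith hlam hμ0 hμ1 h2 hδΛ hele (by positivity) (by positivity))
      (le_of_eq hexp.symm)
  have k1 := key b₁ b₁'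
  have k2 := key b₂ b₂'
  linarith [k1, k2]
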